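/- Let H be an r×n real matrix, G an e×n real matrix, and S₁ an n×n real symmetric PSD matrix. For every n×n real symmetric matrix S₂ with S₁ ⪯ S₂, define C(S₂) := sup { (1/2)·log det(I + H Q₁ Hᵀ) − (1/2)·log det(I + G Q₁ Gᵀ) : Q₁, Q₂ n×n real symmetric PSD with S₁ ⪯ Q₁ + Q₂ ⪯ S₂ }. Then the function S₂ ↦ C(S₂) is continuous on the set {S₂ : S₂ symmetric, S₁ ⪯ S₂} with respect to the standard topology on the space of n×n real matrices. -/

import Mathlib

open Matrix

namespace Stmt16

variable {n : ℕ}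

local notation "Mn" => Matrix (Fin n) (Fin n) ℝ

lemma psd_iff {A : Mn} : A.PosSemidef ↔ Aᵀ = A ∧ ∀ x, 0 ≤ x ⬝ᵥ A *ᵥ x := by
  constructor
  · intro h
    refine ⟨?_, fun x => ?_⟩
    · simpa [Matrix.conjTranspose_eq_transpose_of_trivial, Matrix.IsSymm] using h.1
    · simpa using h.dotProduct_mulVec_nonneg x
  · intro ⟨h1, h2⟩
    refine Matrix.PosSemidef.of_dotProduct_mulVec_nonneg ?_ fun x => ?_
    · simpa [Matrix.IsHermitian, Matrix.conjTranspose_eq_transpose_of_trivial] using h1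
    · simpa using h2 x

lemma psd_quad {A : Mn} (h : A.PosSemidef) (x : Fin n → ℝ) : 0 ≤ x ⬝ᵥ A *ᵥ x :=
  (psd_iff.mp h).2 x

lemma psd_symm {A : Mn} (h : A.PosSemidef) : Aᵀ = A := (psd_iff.mp h).1

lemma dot_transpose (M : Mn) (x y : Fin n → ℝ) : (Mᵀ *ᵥ x) ⬝ᵥ y = x ⬝ᵥ (M *ᵥ y) := by
  rw [Matrix.mulVec_transpose, ← dotProduct_mulVec]

lemma dot_symm_left {A : Mn} (hA : Aᵀ = A) (x y : Fin n → ℝ) :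
    (A *ᵥ x) ⬝ᵥ y = x ⬝ᵥ (A *ᵥ y) := by
  conv_lhs => rw [← hA]
  exact dot_transpose A x y

open scoped MatrixOrder Matrix.Norms.L2Operator in
lemma psd_factor {A : Mn} (hA : A.PosSemidef) : ∃ B : Mn, A = Bᵀ * B := by
  obtain ⟨B, hB⟩ := CStarAlgebra.nonneg_iff_eq_star_mul_self.mp hA.nonneg
  exact ⟨B, by rwa [Matrix.star_eq_conjTranspose, Matrix.conjTranspose_eq_transpose_of_trivial] at hB⟩

lemma dot_factor {B : Mn} (x y : Fin n → ℝ) :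
    x ⬝ᵥ (Bᵀ * B) *ᵥ y = (B *ᵥ x) ⬝ᵥ (B *ᵥ y) := by
  rw [← Matrix.mulVec_mulVec, dotProduct_comm, dot_transpose, dotProduct_comm]

lemma psd_cs {A : Mn} (hA : A.PosSemidef) (x y : Fin n → ℝ) :
    |x ⬝ᵥ A *ᵥ y| ≤ Real.sqrt (x ⬝ᵥ A *ᵥ x) * Real.sqrt (y ⬝ᵥ A *ᵥ y) := by
  obtain ⟨B, rfl⟩ := psd_factor hA
  rw [dot_factor, dot_factor, dot_factor]
  set u := B *ᵥ x
  set v := B *ᵥ y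
  have huu : (0:ℝ) ≤ u ⬝ᵥ u := Finset.sum_nonneg fun i _ => mul_self_nonneg _
  have hvv : (0:ℝ) ≤ v ⬝ᵥ v := Finset.sum_nonneg fun i _ => mul_self_nonneg _
  have hcs : (u ⬝ᵥ v) ^ 2 ≤ (u ⬝ᵥ u) * (v ⬝ᵥ v) := by
    simpa [dotProduct, sq] using
      Finset.sum_mul_sq_le_sq_mul_sq Finset.univ u v
  calc |u ⬝ᵥ v| = Real.sqrt ((u ⬝ᵥ v) ^ 2) := (Real.sqrt_sq_eq_abs _).symm
    _ ≤ Real.sqrt ((u ⬝ᵥ u) * (v ⬝ᵥ v)) := Real.sqrt_le_sqrt hcs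
    _ = Real.sqrt (u ⬝ᵥ u) * Real.sqrt (v ⬝ᵥ v) := Real.sqrt_mul huu _

lemma quad_le_trace {A : Mn} (hA : A.PosSemidef) (x : Fin n → ℝ) :
    x ⬝ᵥ A *ᵥ x ≤ A.trace * (x ⬝ᵥ x) := by
  obtain ⟨B, rfl⟩ := psd_factor hA
  rw [dot_factor]
  have htr : (Bᵀ * B).trace = ∑ i : Fin n, ∑ j : Fin n, (B i j) ^ 2 := by
    rw [Matrix.trace]
    simp only [Matrix.diag, Matrix.mul_apply, Matrix.transpose_apply, sq]
    exact Finset.sum_comm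
  have hx2 : x ⬝ᵥ x = ∑ j : Fin n, (x j) ^ 2 := by simp [dotProduct, sq]
  rw [htr, hx2, Finset.sum_mul]
  have : ∀ i : Fin n, (B *ᵥ x) i * (B *ᵥ x) i ≤ (∑ j : Fin n, (B i j) ^ 2) * ∑ j : Fin n, (x j) ^ 2 := by
    intro i
    have := Finset.sum_mul_sq_le_sq_mul_sq Finset.univ (fun j => B i j) x
    simpa [Matrix.mulVec, dotProduct, ← sq] using this
  calc (B *ᵥ x) ⬝ᵥ (B *ᵥ x) = ∑ i : Fin n, (B *ᵥ x) i * (B *ᵥ x) i := rfl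
    _ ≤ ∑ i : Fin n, (∑ j : Fin n, (B i j) ^ 2) * ∑ j : Fin n, (x j) ^ 2 :=
        Finset.sum_le_sum fun i _ => this i

lemma single_dot (A : Mn) (i j : Fin n) : Pi.single i 1 ⬝ᵥ A *ᵥ Pi.single j 1 = A i j := by
  simp [dotProduct, Matrix.mulVec, Pi.single_apply]

lemma psd_diag_nonneg {A : Mn} (hA : A.PosSemidef) (i : Fin n) : 0 ≤ A i i := by
  have := psd_quad hA (Pi.single i 1)
  rwa [single_dot] at this

lemma psd_trace_nonneg {A : Mn} (hA : A.PosSemidef) : 0 ≤ A.trace :=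
  Finset.sum_nonneg fun i _ => psd_diag_nonneg hA i

lemma psd_diag_le_trace {A : Mn} (hA : A.PosSemidef) (i : Fin n) : A i i ≤ A.trace :=
  Finset.single_le_sum (fun k _ => psd_diag_nonneg hA k) (Finset.mem_univ i)

lemma trace_mono {A B : Mn} (hA : (B - A).PosSemidef) : A.trace ≤ B.trace := by
  have := psd_trace_nonneg hA
  rw [Matrix.trace_sub] at this
  linarith

lemma psd_smul {A : Mn} (hA : A.PosSemidef) {c : ℝ} (hc : 0 ≤ c) : (c • A).PosSemidef := by
  rw [psd_iff]
  refine ⟨by rw [Matrix.transpose_smul, psd_symm hA], fun x => ?_⟩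
  rw [Matrix.smul_mulVec, dotProduct_smul, smul_eq_mul]
  exact mul_nonneg hc (psd_quad hA x)

lemma psd_conj {A : Mn} (hA : A.PosSemidef) (M : Mn) : (M * A * Mᵀ).PosSemidef := by
  have := hA.mul_mul_conjTranspose_same M
  rwa [Matrix.conjTranspose_eq_transpose_of_trivial] at this

lemma psd_pad {U V : Mn} {a b : ℝ} (h : (U + a • (1:Mn) - V).PosSemidef) (hab : a ≤ b) :
    (U + b • (1:Mn) - V).PosSemidef := by
  have h2 : ((b - a) • (1:Mn)).PosSemidef := psd_smul Matrix.PosSemidef.one (by linarith)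
  have := h.add h2
  have heq : U + a • (1:Mn) - V + (b - a) • (1:Mn) = U + b • (1:Mn) - V := by
    rw [sub_smul]
    abel
  rwa [heq] at this

lemma key {S' Q : Mn} (hS' : S'.PosSemidef) {η : ℝ} (hη : 0 < η)
    (hQ : Q.PosSemidef) (hQle : (S' + η • (1:Mn) - Q).PosSemidef) :
    ∃ Q' : Mn, Q'.PosSemidef ∧ (S' - Q').PosSemidef ∧
      ∀ i j, |Q' i j - Q i j| ≤ 2 * Real.sqrt (η * Q.trace) + η := by
  classical
  set A : Mn := S' + η • (1:Mn) with hA_def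
  have hS't : S'ᵀ = S' := psd_symm hS'
  have hAt : Aᵀ = A := by
    rw [hA_def, Matrix.transpose_add, Matrix.transpose_smul, Matrix.transpose_one, hS't]
  have hApd : A.PosDef := by
    have h1 : (η • (1:Mn)).PosDef := by
      rw [Matrix.smul_one_eq_diagonal]
      exact Matrix.PosDef.diagonal fun _ => hη
    exact Matrix.PosDef.posSemidef_add hS' h1
  have hdet : IsUnit A.det := isUnit_iff_ne_zero.mpr hApd.det_pos.ne'
  set P : Mn := A⁻¹ with hP_def
  have hAP : A * P = 1 := A.mul_nonsing_inv hdet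
  have hPA : P * A = 1 := A.nonsing_inv_mul hdet
  have hPt : Pᵀ = P := by rw [hP_def, Matrix.transpose_nonsing_inv, hAt]
  have hSA : S' * A = A * S' := by
    rw [hA_def, Matrix.mul_add, Matrix.add_mul, mul_smul_comm, smul_mul_assoc, mul_one, one_mul]
  have hPS : P * S' = S' * P := by
    calc P * S' = P * S' * (A * P) := by rw [hAP, Matrix.mul_one]
      _ = P * (S' * A) * P := by simp only [Matrix.mul_assoc]
      _ = P * (A * S') * P := by rw [hSA]
      _ = P * A * (S' * P) := by simp only [Matrix.mul_assoc]
      _ = S' * P := by rw [hPA, Matrix.one_mul]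
  set Mm : Mn := S' * P with hM_def
  have hMt : Mmᵀ = Mm := by rw [hM_def, Matrix.transpose_mul, hPt, hS't, hPS]
  have h2 : Mm + η • P = 1 := by
    rw [hM_def, ← hAP, hA_def, Matrix.add_mul, smul_mul_assoc, Matrix.one_mul]
  have hM1 : Mm = 1 - η • P := by rw [← h2]; abel
  have hPpsd : P.PosSemidef := by
    rw [psd_iff]
    refine ⟨hPt, fun x => ?_⟩
    have hx : A *ᵥ (P *ᵥ x) = x := by rw [Matrix.mulVec_mulVec, hAP, Matrix.one_mulVec]
    have hkey : x ⬝ᵥ P *ᵥ x = (A *ᵥ (P *ᵥ x)) ⬝ᵥ (P *ᵥ x) := by rw [hx]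
    rw [hkey, dot_symm_left hAt]
    exact psd_quad hApd.posSemidef _
  have hS'A : S' * A = S' * S' + η • S' := by
    rw [hA_def, Matrix.mul_add, mul_smul_comm, Matrix.mul_one]
  have hMpsd : Mm.PosSemidef := by
    rw [psd_iff]
    refine ⟨hMt, fun x => ?_⟩
    have hx : A *ᵥ (P *ᵥ x) = x := by rw [Matrix.mulVec_mulVec, hAP, Matrix.one_mulVec]
    have hMx : Mm *ᵥ x = S' *ᵥ (P *ᵥ x) := by rw [hM_def, ← Matrix.mulVec_mulVec]
    have hkey : x ⬝ᵥ Mm *ᵥ x = (P *ᵥ x) ⬝ᵥ A *ᵥ (S' *ᵥ (P *ᵥ x)) := by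
      conv_lhs => rw [hMx]
      rw [← dot_symm_left hAt, hx]
    rw [hkey, Matrix.mulVec_mulVec, ← hSA, hS'A, Matrix.add_mulVec,
      dotProduct_add, Matrix.smul_mulVec, dotProduct_smul, smul_eq_mul]
    have e1 : 0 ≤ (P *ᵥ x) ⬝ᵥ (S' * S') *ᵥ (P *ᵥ x) := by
      have hfac : S' * S' = S'ᵀ * S' := by rw [hS't]
      rw [hfac, dot_factor]
      exact Finset.sum_nonneg fun i _ => mul_self_nonneg _
    have e2 : 0 ≤ (P *ᵥ x) ⬝ᵥ S' *ᵥ (P *ᵥ x) := psd_quad hS' _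
    positivity
  have hAQ : (A - Q).PosSemidef := hQle
  set Q' : Mn := Mm * Q * Mm with hQ'_def
  have hQ'psd : Q'.PosSemidef := by
    have := psd_conj hQ Mm
    rwa [hMt] at this
  -- (ii) S' - Q' is PSD
  have hconj : (Mm * (A - Q) * Mm).PosSemidef := by
    have := psd_conj hAQ Mm
    rwa [hMt] at this
  have hMAM : Mm * A * Mm = S' * Mm := by
    have h3 : Mm * A * Mm = S' * (P * A) * Mm := by
      rw [hM_def]
      simp only [Matrix.mul_assoc]
    rw [h3, hPA, Matrix.mul_one]
  have hS'M : S' - S' * Mm = η • Mm := by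
    have h3 : S' * Mm = S' - η • Mm := by
      conv_lhs => rw [hM1, Matrix.mul_sub, Matrix.mul_one, mul_smul_comm, ← hM_def]
    rw [h3]
    abel
  have hid : S' - Mm * Q * Mm = η • Mm + Mm * (A - Q) * Mm := by
    have h3 : Mm * (A - Q) * Mm = Mm * A * Mm - Mm * Q * Mm := by noncomm_ring
    rw [h3, hMAM, ← hS'M]
    abel
  have hS'Q' : (S' - Q').PosSemidef := by
    rw [hQ'_def, hid]
    exact (psd_smul hMpsd hη.le).add hconj
  -- (iii) entrywise bound
  set D : Mn := η • P with hD_def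
  have hDt : Dᵀ = D := by rw [hD_def, Matrix.transpose_smul, hPt]
  have hMD : Mm = 1 - D := hM1
  have hquadD : ∀ x, x ⬝ᵥ D *ᵥ x ≤ x ⬝ᵥ x := by
    intro x
    have h4 := psd_quad hMpsd x
    rw [hMD, Matrix.sub_mulVec, dotProduct_sub, Matrix.one_mulVec] at h4
    linarith
  have hDquad_nonneg : ∀ x, 0 ≤ x ⬝ᵥ D *ᵥ x := fun x =>
    psd_quad (psd_smul hPpsd hη.le) x
  have hPAP : P * A * P = P := by rw [hPA, Matrix.one_mul]
  have hDAD : D * A * D = η • D := by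
    calc D * A * D = η • (η • (P * A * P)) := by
          simp only [hD_def, smul_mul_assoc, mul_smul_comm]
      _ = η • (η • P) := by rw [hPAP]
      _ = η • D := by rw [hD_def]
  have hwQw : ∀ u : Fin n → ℝ, (D *ᵥ u) ⬝ᵥ Q *ᵥ (D *ᵥ u) ≤ η * (u ⬝ᵥ u) := by
    intro u
    have h5 := psd_quad hAQ (D *ᵥ u)
    rw [Matrix.sub_mulVec, dotProduct_sub] at h5
    have h6 : (D *ᵥ u) ⬝ᵥ A *ᵥ (D *ᵥ u) = η * (u ⬝ᵥ D *ᵥ u) := by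
      rw [dot_symm_left hDt, Matrix.mulVec_mulVec, Matrix.mulVec_mulVec,
        hDAD, Matrix.smul_mulVec, dotProduct_smul, smul_eq_mul]
    have h7 : u ⬝ᵥ D *ᵥ u ≤ u ⬝ᵥ u := hquadD u
    have h8 : η * (u ⬝ᵥ D *ᵥ u) ≤ η * (u ⬝ᵥ u) := mul_le_mul_of_nonneg_left h7 hη.le
    linarith
  have hee : ∀ i : Fin n, (Pi.single i 1 : Fin n → ℝ) ⬝ᵥ Pi.single i 1 = 1 := by
    intro i
    simp [dotProduct, Pi.single_apply]
  have htrQ : 0 ≤ Q.trace := psd_trace_nonneg hQ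
  have hsqD : ∀ i : Fin n, Real.sqrt ((D *ᵥ Pi.single i 1) ⬝ᵥ Q *ᵥ (D *ᵥ Pi.single i 1)) ≤
      Real.sqrt η := by
    intro i
    have := hwQw (Pi.single i 1)
    rw [hee i, mul_one] at this
    exact Real.sqrt_le_sqrt this
  have hsqQ : ∀ j : Fin n, Real.sqrt (Pi.single j 1 ⬝ᵥ Q *ᵥ (Pi.single j 1 : Fin n → ℝ)) ≤
      Real.sqrt Q.trace := by
    intro j
    rw [single_dot]
    exact Real.sqrt_le_sqrt (psd_diag_le_trace hQ j)
  have hDQ : ∀ i j, |(D * Q) i j| ≤ Real.sqrt (η * Q.trace) := by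
    intro i j
    have he : (D * Q) i j = (D *ᵥ Pi.single i 1) ⬝ᵥ Q *ᵥ (Pi.single j 1 : Fin n → ℝ) := by
      rw [← single_dot (D * Q) i j, ← Matrix.mulVec_mulVec, ← dot_symm_left hDt]
    rw [he]
    calc |(D *ᵥ Pi.single i 1) ⬝ᵥ Q *ᵥ (Pi.single j 1 : Fin n → ℝ)|
        ≤ Real.sqrt ((D *ᵥ Pi.single i 1) ⬝ᵥ Q *ᵥ (D *ᵥ Pi.single i 1)) *
          Real.sqrt (Pi.single j 1 ⬝ᵥ Q *ᵥ (Pi.single j 1 : Fin n → ℝ)) := psd_cs hQ _ _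
      _ ≤ Real.sqrt η * Real.sqrt Q.trace :=
          mul_le_mul (hsqD i) (hsqQ j) (Real.sqrt_nonneg _) (Real.sqrt_nonneg _)
      _ = Real.sqrt (η * Q.trace) := (Real.sqrt_mul hη.le _).symm
  have hQD : ∀ i j, |(Q * D) i j| ≤ Real.sqrt (η * Q.trace) := by
    intro i j
    have he : (Q * D) i j = (D * Q) j i := by
      have h9 : (Q * D)ᵀ = D * Q := by rw [Matrix.transpose_mul, hDt, psd_symm hQ]
      rw [← h9, Matrix.transpose_apply]
    rw [he]
    exact hDQ j i
  have hDQD : ∀ i j, |(D * Q * D) i j| ≤ η := by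
    intro i j
    have he : (D * Q * D) i j =
        (D *ᵥ Pi.single i 1) ⬝ᵥ Q *ᵥ (D *ᵥ Pi.single j 1) := by
      rw [← single_dot (D * Q * D) i j, ← Matrix.mulVec_mulVec, ← Matrix.mulVec_mulVec,
        ← dot_symm_left hDt]
    rw [he]
    calc |(D *ᵥ Pi.single i 1) ⬝ᵥ Q *ᵥ (D *ᵥ Pi.single j 1)|
        ≤ Real.sqrt ((D *ᵥ Pi.single i 1) ⬝ᵥ Q *ᵥ (D *ᵥ Pi.single i 1)) *
          Real.sqrt ((D *ᵥ Pi.single j 1) ⬝ᵥ Q *ᵥ (D *ᵥ Pi.single j 1)) := psd_cs hQ _ _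
      _ ≤ Real.sqrt η * Real.sqrt η :=
          mul_le_mul (hsqD i) (hsqD j) (Real.sqrt_nonneg _) (Real.sqrt_nonneg _)
      _ = η := Real.mul_self_sqrt hη.le
  have hexp : Q' - Q = D * Q * D - D * Q - Q * D := by
    rw [hQ'_def, hMD]
    noncomm_ring
  refine ⟨Q', hQ'psd, hS'Q', fun i j => ?_⟩
  have he : Q' i j - Q i j = (D * Q * D) i j - (D * Q) i j - (Q * D) i j := by
    have := congrArg (fun X : Mn => X i j) hexp
    simpa [Matrix.sub_apply] using this
  rw [he]
  have h10 := hDQD i j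
  have h11 := hDQ i j
  have h12 := hQD i j
  have habs : |(D * Q * D) i j - (D * Q) i j - (Q * D) i j| ≤
      |(D * Q * D) i j| + |(D * Q) i j| + |(Q * D) i j| := by
    calc |(D * Q * D) i j - (D * Q) i j - (Q * D) i j|
        = |(D * Q * D) i j + -((D * Q) i j) + -((Q * D) i j)| := by ring_nf
      _ ≤ |(D * Q * D) i j| + |-((D * Q) i j)| + |-((Q * D) i j)| := abs_add_three _ _ _
      _ = |(D * Q * D) i j| + |(D * Q) i j| + |(Q * D) i j| := by rw [abs_neg, abs_neg]
  linarith

lemma herm_t {A : Mn} (h : A.IsHermitian) : Aᵀ = A := by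
  rw [← Matrix.conjTranspose_eq_transpose_of_trivial]
  exact h

lemma psd_entry_abs_le_trace {A : Mn} (hA : A.PosSemidef) (i j : Fin n) :
    |A i j| ≤ A.trace := by
  have h := psd_cs hA (Pi.single i 1) (Pi.single j 1)
  rw [single_dot, single_dot, single_dot] at h
  have h2 : Real.sqrt (A i i) ≤ Real.sqrt A.trace := Real.sqrt_le_sqrt (psd_diag_le_trace hA i)
  have h3 : Real.sqrt (A j j) ≤ Real.sqrt A.trace := Real.sqrt_le_sqrt (psd_diag_le_trace hA j)
  calc |A i j| ≤ Real.sqrt (A i i) * Real.sqrt (A j j) := h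
    _ ≤ Real.sqrt A.trace * Real.sqrt A.trace :=
        mul_le_mul h2 h3 (Real.sqrt_nonneg _) (Real.sqrt_nonneg _)
    _ = A.trace := Real.mul_self_sqrt (psd_trace_nonneg hA)

lemma quad_abs_le {E : Mn} {d : ℝ} (hd : ∀ i j, |E i j| ≤ d) (hd0 : 0 ≤ d) (x : Fin n → ℝ) :
    |x ⬝ᵥ E *ᵥ x| ≤ d * ((n : ℝ) * (x ⬝ᵥ x)) := by
  have h1 : |x ⬝ᵥ E *ᵥ x| ≤ ∑ i : Fin n, ∑ j : Fin n, d * (|x i| * |x j|) := by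
    calc |x ⬝ᵥ E *ᵥ x| = |∑ i : Fin n, ∑ j : Fin n, x i * (E i j * x j)| := by
          simp [dotProduct, Matrix.mulVec, Finset.mul_sum]
      _ ≤ ∑ i : Fin n, |∑ j : Fin n, x i * (E i j * x j)| := Finset.abs_sum_le_sum_abs _ _
      _ ≤ ∑ i : Fin n, ∑ j : Fin n, |x i * (E i j * x j)| :=
          Finset.sum_le_sum fun i _ => Finset.abs_sum_le_sum_abs _ _
      _ ≤ ∑ i : Fin n, ∑ j : Fin n, d * (|x i| * |x j|) := by
          refine Finset.sum_le_sum fun i _ => Finset.sum_le_sum fun j _ => ?_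
          rw [abs_mul, abs_mul]
          nlinarith [mul_le_mul_of_nonneg_right (hd i j)
            (mul_nonneg (abs_nonneg (x i)) (abs_nonneg (x j))),
            abs_nonneg (x i), abs_nonneg (x j), abs_nonneg (E i j)]
  have h2 : ∑ i : Fin n, ∑ j : Fin n, d * (|x i| * |x j|) = d * (∑ i : Fin n, |x i|) ^ 2 := by
    rw [sq, Finset.sum_mul_sum]
    rw [Finset.mul_sum]
    refine Finset.sum_congr rfl fun i _ => ?_
    rw [Finset.mul_sum]
  have h3 : (∑ i : Fin n, |x i|) ^ 2 ≤ (n : ℝ) * (x ⬝ᵥ x) := by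
    have h4 := Finset.sum_mul_sq_le_sq_mul_sq Finset.univ (fun _ : Fin n => (1:ℝ)) (fun i => |x i|)
    have h5 : x ⬝ᵥ x = ∑ i : Fin n, |x i| ^ 2 := by
      simp [dotProduct, sq, abs_mul_abs_self]
    rw [h5]
    simpa using h4
  calc |x ⬝ᵥ E *ᵥ x| ≤ d * (∑ i : Fin n, |x i|) ^ 2 := h1.trans_eq h2
    _ ≤ d * ((n : ℝ) * (x ⬝ᵥ x)) := mul_le_mul_of_nonneg_left h3 hd0

lemma close_psd {S T : Mn} (hsym : (S - T)ᵀ = S - T) {d : ℝ} (hd0 : 0 ≤ d)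
    (hd : ∀ i j, |S i j - T i j| ≤ d) :
    (T + ((n : ℝ) * d) • (1:Mn) - S).PosSemidef := by
  have heq : T + ((n : ℝ) * d) • (1:Mn) - S = ((n : ℝ) * d) • (1:Mn) - (S - T) := by abel
  rw [heq, psd_iff]
  constructor
  · rw [Matrix.transpose_sub, Matrix.transpose_smul, Matrix.transpose_one, hsym]
  · intro x
    have h1 : |x ⬝ᵥ (S - T) *ᵥ x| ≤ d * ((n : ℝ) * (x ⬝ᵥ x)) := by
      refine quad_abs_le (fun i j => ?_) hd0 x
      rw [Matrix.sub_apply]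
      exact hd i j
    rw [Matrix.sub_mulVec, dotProduct_sub, Matrix.smul_mulVec,
      dotProduct_smul, Matrix.one_mulVec, smul_eq_mul]
    have h2 := (abs_le.mp h1).2
    have h3 := (abs_le.mp h1).1
    nlinarith

attribute [local instance] Matrix.normedAddCommGroup Matrix.normedSpace

lemma continuous_quad (x : Fin n → ℝ) : Continuous fun A : Mn => x ⬝ᵥ A *ᵥ x := by
  simp only [dotProduct, Matrix.mulVec]
  refine continuous_finset_sum _ fun i _ => Continuous.mul continuous_const ?_
  exact continuous_finset_sum _ fun j _ =>
    Continuous.mul (Continuous.matrix_elem continuous_id i j) continuous_const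

lemma isClosed_psd : IsClosed {A : Mn | A.PosSemidef} := by
  have hset : {A : Mn | A.PosSemidef} =
      {A : Mn | Aᵀ = A} ∩ ⋂ x : Fin n → ℝ, {A : Mn | 0 ≤ x ⬝ᵥ A *ᵥ x} := by
    ext A
    simp only [Set.mem_setOf_eq, Set.mem_inter_iff, Set.mem_iInter, psd_iff]
  rw [hset]
  refine IsClosed.inter ?_ (isClosed_iInter fun x => isClosed_le continuous_const (continuous_quad x))
  have h2 : {A : Mn | Aᵀ = A} = (fun A : Mn => Aᵀ - A) ⁻¹' {0} := by
    ext A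
    simp [sub_eq_zero]
  rw [h2]
  exact IsClosed.preimage ((Continuous.matrix_transpose continuous_id).sub continuous_id)
    isClosed_singleton

variable {r e : ℕ}

/-- The objective function. -/
noncomputable def phi (H : Matrix (Fin r) (Fin n) ℝ) (G : Matrix (Fin e) (Fin n) ℝ)
    (Q : Matrix (Fin n) (Fin n) ℝ) : ℝ :=
  (1/2) * Real.log (1 + H * Q * Hᵀ).det - (1/2) * Real.log (1 + G * Q * Gᵀ).det

/-- The constraint set of achievable values. -/
def cset (H : Matrix (Fin r) (Fin n) ℝ) (G : Matrix (Fin e) (Fin n) ℝ)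
    (S₁ S₂ : Matrix (Fin n) (Fin n) ℝ) : Set ℝ :=
  {c : ℝ | ∃ Q₁ Q₂ : Matrix (Fin n) (Fin n) ℝ,
    Q₁.PosSemidef ∧ Q₂.PosSemidef ∧
    (Q₁ + Q₂ - S₁).PosSemidef ∧ (S₂ - (Q₁ + Q₂)).PosSemidef ∧
    c = (1/2) * Real.log (1 + H * Q₁ * Hᵀ).det
      - (1/2) * Real.log (1 + G * Q₁ * Gᵀ).det}

lemma mem_cset {H : Matrix (Fin r) (Fin n) ℝ} {G : Matrix (Fin e) (Fin n) ℝ}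
    {S₁ Sx : Matrix (Fin n) (Fin n) ℝ} (hSx : (Sx - S₁).PosSemidef) (c : ℝ) :
    c ∈ cset H G S₁ Sx ↔ ∃ Q : Mn, Q.PosSemidef ∧ (Sx - Q).PosSemidef ∧ c = phi H G Q := by
  constructor
  · rintro ⟨Q₁, Q₂, h1, h2, h3, h4, rfl⟩
    refine ⟨Q₁, h1, ?_, rfl⟩
    have h5 := h4.add h2
    have heq : Sx - (Q₁ + Q₂) + Q₂ = Sx - Q₁ := by abel
    rwa [heq] at h5
  · rintro ⟨Q, h1, h2, rfl⟩
    refine ⟨Q, Sx - Q, h1, h2, ?_, ?_, rfl⟩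
    · have heq : Q + (Sx - Q) - S₁ = Sx - S₁ := by abel
      rw [heq]
      exact hSx
    · have heq : Sx - (Q + (Sx - Q)) = (0 : Mn) := by abel
      rw [heq]
      exact Matrix.PosSemidef.zero

lemma phi_zero (H : Matrix (Fin r) (Fin n) ℝ) (G : Matrix (Fin e) (Fin n) ℝ) :
    phi H G (0 : Mn) = 0 := by
  simp [phi]

lemma phi_continuousOn (H : Matrix (Fin r) (Fin n) ℝ) (G : Matrix (Fin e) (Fin n) ℝ) :
    ContinuousOn (phi H G) {Q : Mn | Q.PosSemidef} := by
  intro Q hQ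
  apply ContinuousAt.continuousWithinAt
  have hdet : ∀ {m : ℕ} (F : Matrix (Fin m) (Fin n) ℝ),
      Continuous fun Q : Mn => (1 + F * Q * Fᵀ).det := fun F =>
    (continuous_const.add ((continuous_const.matrix_mul continuous_id).matrix_mul
      continuous_const)).matrix_det
  have hpos : ∀ {m : ℕ} (F : Matrix (Fin m) (Fin n) ℝ), 0 < (1 + F * Q * Fᵀ).det := by
    intro m F
    have hpsd : (F * Q * Fᵀ).PosSemidef := by
      have := hQ.mul_mul_conjTranspose_same F
      rwa [Matrix.conjTranspose_eq_transpose_of_trivial] at this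
    exact (Matrix.PosDef.add_posSemidef Matrix.PosDef.one hpsd).det_pos
  apply ContinuousAt.sub
  · exact continuousAt_const.mul
      (ContinuousAt.comp (x := Q) (Real.continuousAt_log (hpos H).ne') (hdet H).continuousAt)
  · exact continuousAt_const.mul
      (ContinuousAt.comp (x := Q) (Real.continuousAt_log (hpos G).ne') (hdet G).continuousAt)

end Stmt16

attribute [local instance] Matrix.normedAddCommGroup Matrix.normedSpace

/-- Appendix of the paper. The secrecy capacity under a
double-sided correlation matrix constraint,
`C(S₂) = sup {½ log det(I + H Q₁ Hᵀ) − ½ log det(I + G Q₁ Gᵀ) :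
              Q₁, Q₂ ⪰ 0, S₁ ⪯ Q₁ + Q₂ ⪯ S₂}`,
is continuous in the upper constraint matrix `S₂` on `{S₂ symmetric : S₁ ⪯ S₂}`. -/
theorem stmt_16 {r e n : ℕ} (H : Matrix (Fin r) (Fin n) ℝ) (G : Matrix (Fin e) (Fin n) ℝ)
    (S₁ : Matrix (Fin n) (Fin n) ℝ) (hS₁ : S₁.PosSemidef) :
    ContinuousOn
      (fun S₂ : Matrix (Fin n) (Fin n) ℝ =>
        sSup {c : ℝ | ∃ Q₁ Q₂ : Matrix (Fin n) (Fin n) ℝ,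
          Q₁.PosSemidef ∧ Q₂.PosSemidef ∧
          (Q₁ + Q₂ - S₁).PosSemidef ∧ (S₂ - (Q₁ + Q₂)).PosSemidef ∧
          c = (1/2) * Real.log (1 + H * Q₁ * Hᵀ).det
            - (1/2) * Real.log (1 + G * Q₁ * Gᵀ).det})
      {S₂ : Matrix (Fin n) (Fin n) ℝ | S₂.IsHermitian ∧ (S₂ - S₁).PosSemidef} := by
  classical
  show ContinuousOn (fun S₂ : Matrix (Fin n) (Fin n) ℝ => sSup (Stmt16.cset H G S₁ S₂))
      {S₂ : Matrix (Fin n) (Fin n) ℝ | S₂.IsHermitian ∧ (S₂ - S₁).PosSemidef}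
  intro S₀ hS₀
  refine Metric.continuousWithinAt_iff.mpr ?_
  intro ε hε
  obtain ⟨hS₀herm, hS₀S₁⟩ := hS₀
  have hS₀psd : S₀.PosSemidef := by
    have h := hS₀S₁.add hS₁
    have heq : S₀ - S₁ + S₁ = S₀ := by abel
    rwa [heq] at h
  set B : Matrix (Fin n) (Fin n) ℝ := S₀ + 1 with hB_def
  have hBpsd : B.PosSemidef := hS₀psd.add Matrix.PosSemidef.one
  have hBS₀ : (B - S₀).PosSemidef := by
    have heq : B - S₀ = (1 : Matrix (Fin n) (Fin n) ℝ) := by rw [hB_def]; abel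
    rw [heq]
    exact Matrix.PosSemidef.one
  set T : ℝ := B.trace with hT_def
  have hT : 0 ≤ T := Stmt16.psd_trace_nonneg hBpsd
  set K : Set (Matrix (Fin n) (Fin n) ℝ) :=
    {Q | Q.PosSemidef ∧ (B - Q).PosSemidef} with hK_def
  have hKclosed : IsClosed K :=
    Stmt16.isClosed_psd.inter
      (Stmt16.isClosed_psd.preimage (continuous_const.sub continuous_id))
  have hKsub : K ⊆ Metric.closedBall 0 T := by
    rintro Q ⟨h1, h2⟩
    rw [Metric.mem_closedBall, dist_zero_right, Matrix.norm_le_iff hT]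
    intro i j
    rw [Real.norm_eq_abs]
    exact (Stmt16.psd_entry_abs_le_trace h1 i j).trans (Stmt16.trace_mono h2)
  have hKcompact : IsCompact K :=
    IsCompact.of_isClosed_subset (isCompact_closedBall 0 T) hKclosed hKsub
  have hφK : ContinuousOn (Stmt16.phi H G) K :=
    (Stmt16.phi_continuousOn H G).mono fun Q hQ => hQ.1
  have hUC := hKcompact.uniformContinuousOn_of_continuous hφK
  replace hUC := Metric.uniformContinuousOn_iff.mp hUC
  obtain ⟨δφ, hδφpos, hUC⟩ := hUC (ε/2) (by positivity)
  set η : ℝ := min 1 (min (δφ/2) (δφ^2/(64*(T+1)))) with hη_def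
  have hηpos : 0 < η := by
    refine lt_min one_pos (lt_min (by positivity) ?_)
    have h0 : (0:ℝ) < 64*(T+1) := by positivity
    positivity
  have hη1 : η ≤ 1 := min_le_left _ _
  have hη2 : η ≤ δφ/2 := (min_le_right _ _).trans (min_le_left _ _)
  have hη3 : η ≤ δφ^2/(64*(T+1)) := (min_le_right _ _).trans (min_le_right _ _)
  have hbound : 2 * Real.sqrt (η * T) + η < δφ := by
    have h64 : η * (64*(T+1)) ≤ δφ^2 :=
      (le_div_iff₀ (by positivity : (0:ℝ) < 64*(T+1))).mp hη3
    have hsq : Real.sqrt (η * T) ≤ δφ/8 := by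
      have h9 : η * T ≤ (δφ/8)^2 := by nlinarith [hηpos.le, hT]
      calc Real.sqrt (η * T) ≤ Real.sqrt ((δφ/8)^2) := Real.sqrt_le_sqrt h9
        _ = δφ/8 := Real.sqrt_sq (by positivity)
    linarith
  have hbdd : ∀ Sx : Matrix (Fin n) (Fin n) ℝ, (Sx - S₁).PosSemidef → (B - Sx).PosSemidef →
      BddAbove (Stmt16.cset H G S₁ Sx) := by
    intro Sx h1 h2
    refine BddAbove.mono ?_ (hKcompact.image_of_continuousOn hφK).bddAbove
    intro c hc
    obtain ⟨Q, hQ, hQSx, rfl⟩ := (Stmt16.mem_cset h1 c).mp hc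
    have hBQ : (B - Q).PosSemidef := by
      have h := h2.add hQSx
      have heq : B - Sx + (Sx - Q) = B - Q := by abel
      rwa [heq] at h
    exact ⟨Q, ⟨hQ, hBQ⟩, rfl⟩
  have hne : ∀ Sx : Matrix (Fin n) (Fin n) ℝ, (Sx - S₁).PosSemidef →
      (Stmt16.cset H G S₁ Sx).Nonempty := by
    intro Sx h1
    have hSxpsd : Sx.PosSemidef := by
      have h := h1.add hS₁
      have heq : Sx - S₁ + S₁ = Sx := by abel
      rwa [heq] at h
    have hsub0 : (Sx - 0).PosSemidef := by simpa using hSxpsd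
    exact ⟨Stmt16.phi H G 0,
      (Stmt16.mem_cset h1 _).mpr ⟨0, Matrix.PosSemidef.zero, hsub0, rfl⟩⟩
  have hmain : ∀ Sa Sb : Matrix (Fin n) (Fin n) ℝ,
      (Sa - S₁).PosSemidef → (Sb - S₁).PosSemidef →
      (Sb + η • (1:Matrix (Fin n) (Fin n) ℝ) - Sa).PosSemidef →
      (B - Sa).PosSemidef → (B - Sb).PosSemidef →
      sSup (Stmt16.cset H G S₁ Sa) ≤ sSup (Stmt16.cset H G S₁ Sb) + ε/2 := by
    intro Sa Sb hSa1 hSb1 hba hBSa hBSb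
    apply csSup_le (hne Sa hSa1)
    intro c hc
    obtain ⟨Q, hQ, hSaQ, rfl⟩ := (Stmt16.mem_cset hSa1 c).mp hc
    have hSbpsd : Sb.PosSemidef := by
      have h := hSb1.add hS₁
      have heq : Sb - S₁ + S₁ = Sb := by abel
      rwa [heq] at h
    have hQle : (Sb + η • (1:Matrix (Fin n) (Fin n) ℝ) - Q).PosSemidef := by
      have h := hba.add hSaQ
      have heq : Sb + η • (1:Matrix (Fin n) (Fin n) ℝ) - Sa + (Sa - Q) =
          Sb + η • (1:Matrix (Fin n) (Fin n) ℝ) - Q := by abel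
      rwa [heq] at h
    obtain ⟨Q', hQ'psd, hSbQ', hent⟩ := Stmt16.key hSbpsd hηpos hQ hQle
    have hBQ : (B - Q).PosSemidef := by
      have h := hBSa.add hSaQ
      have heq : B - Sa + (Sa - Q) = B - Q := by abel
      rwa [heq] at h
    have htrQ : Q.trace ≤ T := Stmt16.trace_mono hBQ
    have hQK : Q ∈ K := ⟨hQ, hBQ⟩
    have hQ'K : Q' ∈ K := by
      refine ⟨hQ'psd, ?_⟩
      have h := hBSb.add hSbQ'
      have heq : B - Sb + (Sb - Q') = B - Q' := by abel
      rwa [heq] at h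
    have hdQ : dist Q' Q < δφ := by
      rw [dist_eq_norm]
      have hrhs : 0 ≤ 2 * Real.sqrt (η * Q.trace) + η :=
        add_nonneg (by positivity) hηpos.le
      have hnorm : ‖Q' - Q‖ ≤ 2 * Real.sqrt (η * Q.trace) + η := by
        rw [Matrix.norm_le_iff hrhs]
        intro i j
        rw [Real.norm_eq_abs, Matrix.sub_apply]
        exact hent i j
      have hmono : Real.sqrt (η * Q.trace) ≤ Real.sqrt (η * T) :=
        Real.sqrt_le_sqrt (mul_le_mul_of_nonneg_left htrQ hηpos.le)
      linarith
    have hφd := hUC Q' hQ'K Q hQK hdQ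
    rw [Real.dist_eq] at hφd
    have h1 : Stmt16.phi H G Q ≤ Stmt16.phi H G Q' + ε/2 := by
      have h2 := abs_lt.mp hφd
      linarith [h2.1, h2.2]
    have h2 : Stmt16.phi H G Q' ≤ sSup (Stmt16.cset H G S₁ Sb) :=
      le_csSup (hbdd Sb hSb1 hBSb) ((Stmt16.mem_cset hSb1 _).mpr ⟨Q', hQ'psd, hSbQ', rfl⟩)
    linarith
  refine ⟨η/((n:ℝ)+1), div_pos hηpos (by positivity), ?_⟩
  intro S hS hdist
  obtain ⟨hSherm, hSS₁⟩ := hS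
  have hent : ∀ i j, |S i j - S₀ i j| ≤ dist S S₀ := by
    intro i j
    calc |S i j - S₀ i j| = ‖(S - S₀) i j‖ := by rw [Matrix.sub_apply, Real.norm_eq_abs]
      _ ≤ ‖S - S₀‖ := Matrix.norm_entry_le_entrywise_sup_norm _
      _ = dist S S₀ := (dist_eq_norm S S₀).symm
  have hnd : (n:ℝ) * dist S S₀ ≤ η := by
    have h1 : dist S S₀ ≤ η/((n:ℝ)+1) := hdist.le
    have h2 : (n:ℝ) * dist S S₀ ≤ (n:ℝ) * (η/((n:ℝ)+1)) :=
      mul_le_mul_of_nonneg_left h1 (Nat.cast_nonneg n)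
    have h3 : (n:ℝ) * (η/((n:ℝ)+1)) ≤ η := by
      rw [mul_comm, div_mul_eq_mul_div, div_le_iff₀ (by positivity : (0:ℝ) < (n:ℝ)+1)]
      nlinarith [hηpos.le, Nat.cast_nonneg (α := ℝ) n]
    linarith
  have hsymdiff : (S - S₀)ᵀ = S - S₀ := by
    rw [Matrix.transpose_sub, Stmt16.herm_t hSherm, Stmt16.herm_t hS₀herm]
  have hsymdiff2 : (S₀ - S)ᵀ = S₀ - S := by
    rw [Matrix.transpose_sub, Stmt16.herm_t hSherm, Stmt16.herm_t hS₀herm]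
  have hSS₀ : (S₀ + η • (1:Matrix (Fin n) (Fin n) ℝ) - S).PosSemidef :=
    Stmt16.psd_pad (Stmt16.close_psd hsymdiff dist_nonneg hent) hnd
  have hS₀S : (S + η • (1:Matrix (Fin n) (Fin n) ℝ) - S₀).PosSemidef := by
    refine Stmt16.psd_pad (Stmt16.close_psd hsymdiff2 dist_nonneg fun i j => ?_) hnd
    rw [abs_sub_comm]
    exact hent i j
  have hBS : (B - S).PosSemidef := by
    have heq : B - S = (S₀ + η • (1:Matrix (Fin n) (Fin n) ℝ) - S)
        + (1 - η) • (1:Matrix (Fin n) (Fin n) ℝ) := by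
      rw [hB_def, sub_smul, one_smul]
      abel
    rw [heq]
    exact hSS₀.add (Stmt16.psd_smul Matrix.PosSemidef.one (by linarith))
  have hd1 := hmain S S₀ hSS₁ hS₀S₁ hSS₀ hBS hBS₀
  have hd2 := hmain S₀ S hS₀S₁ hSS₁ hS₀S hBS₀ hBS
  show dist (sSup (Stmt16.cset H G S₁ S)) (sSup (Stmt16.cset H G S₁ S₀)) < ε
  rw [Real.dist_eq, abs_lt]
  constructor <;> linarith
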